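/- For any 3-form φ on a 6-dimensional real vector space V, define J_φ : V → Λ⁵(V*) by J_φ(v) = (v ⌟ φ) ∧ φ, regarded via the isomorphism Λ⁵(V*) ≅ V ⊗ Λ⁶(V*) as an element of End(V) ⊗ Λ⁶(V*). Then tr(J_φ) = 0 for every φ ∈ Λ³(V*). -/

import Mathlib

open ExteriorAlgebra

/-- The dual functional `⟨v, ·⟩` on `ℝ⁶` associated to a vector `v`. -/
noncomputable def dualV (v : Fin 6 → ℝ) : Module.Dual ℝ (Fin 6 → ℝ) :=
  ∑ i, v i • (LinearMap.proj i : (Fin 6 → ℝ) →ₗ[ℝ] ℝ)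

/-- Interior product (contraction) `v ⌟ φ` of a vector `v ∈ ℝ⁶` with an element of
the exterior algebra `Λ(V*)`, where `V*` is identified with `ℝ⁶`. -/
noncomputable def icontr (v : Fin 6 → ℝ) (φ : ExteriorAlgebra ℝ (Fin 6 → ℝ)) :
    ExteriorAlgebra ℝ (Fin 6 → ℝ) :=
  CliffordAlgebra.contractLeft (dualV v) φ

/-- The basis 1-forms `e¹,…,e⁶` (0-indexed) in the exterior algebra. -/
noncomputable def ee (i : Fin 6) : ExteriorAlgebra ℝ (Fin 6 → ℝ) :=
  ExteriorAlgebra.ι ℝ (Pi.single i 1)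

/-- The volume form `Ω = e¹∧e²∧e³∧e⁴∧e⁵∧e⁶`. -/
noncomputable def vol : ExteriorAlgebra ℝ (Fin 6 → ℝ) :=
  ee 0 * ee 1 * ee 2 * ee 3 * ee 4 * ee 5

/-- The space of 3-forms: the span of the image of `ιMulti ℝ 3`. -/
noncomputable def threeForms : Submodule ℝ (ExteriorAlgebra ℝ (Fin 6 → ℝ)) :=
  Submodule.span ℝ (Set.range (ExteriorAlgebra.ιMulti ℝ 3 (M := Fin 6 → ℝ)))

namespace Stmt16Aux

local notation "Λ" => ExteriorAlgebra ℝ (Fin 6 → ℝ)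
local notation "V" => (Fin 6 → ℝ)

/-! ### basic lemmas about `dualV` and `icontr` -/

lemma dualV_apply (v w : V) : dualV v w = ∑ i, v i * w i := by
  simp [dualV]

lemma dualV_single (q : Fin 6) : dualV (Pi.single q (1:ℝ)) = LinearMap.proj q := by
  ext w
  simp [dualV_apply, Pi.single_apply, ite_mul, eq_comm]

lemma dualV_apply_single (v : V) (q : Fin 6) : dualV v (Pi.single q 1) = v q := by
  simp [dualV_apply, Pi.single_apply, mul_ite, Finset.sum_ite_eq']

lemma icontr_ι_mul (v u : V) (x : Λ) :
    icontr v (ι ℝ u * x) = dualV v u • x - ι ℝ u * icontr v x :=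
  CliffordAlgebra.contractLeft_ι_mul _ _ _

lemma icontr_one (v : V) : icontr v (1 : Λ) = 0 :=
  CliffordAlgebra.contractLeft_one _ _

lemma icontr_sum (c : Fin 6 → ℝ) (x : Λ) :
    icontr c x = ∑ q, c q • icontr (Pi.single q 1) x := by
  have h : dualV c = ∑ q, c q • dualV (Pi.single q (1:ℝ)) := by
    simp_rw [dualV_single]; rfl
  simp only [icontr, h, map_sum, map_smul, LinearMap.sum_apply, LinearMap.smul_apply]

/-! ### anticommutation -/

lemma swι (x y : V) (z : Λ) : ι ℝ x * (ι ℝ y * z) = -(ι ℝ y * (ι ℝ x * z)) := by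
  have h : ι ℝ x * ι ℝ y = -(ι ℝ y * ι ℝ x) :=
    eq_neg_of_add_eq_zero_left (ι_add_mul_swap x y)
  rw [← mul_assoc, h, neg_mul, mul_assoc]

lemma sweq (i j : Fin 6) (z : Λ) : ee i * (ee j * z) = -(ee j * (ee i * z)) :=
  swι _ _ _

lemma sqee (i : Fin 6) (z : Λ) : ee i * (ee i * z) = 0 := by
  rw [← mul_assoc, ee, ι_sq_zero, zero_mul]

lemma sqee' (i : Fin 6) : ee i * ee i = 0 := ι_sq_zero _

lemma ee_mul_vol (q : Fin 6) : ee q * vol = 0 := by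
  fin_cases q
  · show ee 0 * vol = 0
    simp only [vol, mul_assoc]; rw [sqee]
  · show ee 1 * vol = 0
    simp only [vol, mul_assoc]; rw [sweq 1 0]; simp [sqee]
  · show ee 2 * vol = 0
    simp only [vol, mul_assoc]; rw [sweq 2 0, sweq 2 1]; simp [sqee]
  · show ee 3 * vol = 0
    simp only [vol, mul_assoc]; rw [sweq 3 0, sweq 3 1, sweq 3 2]; simp [sqee]
  · show ee 4 * vol = 0
    simp only [vol, mul_assoc]; rw [sweq 4 0, sweq 4 1, sweq 4 2, sweq 4 3]; simp [sqee]
  · show ee 5 * vol = 0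
    simp only [vol, mul_assoc]; rw [sweq 5 0, sweq 5 1, sweq 5 2, sweq 5 3, sweq 5 4]
    simp [sqee, sqee']

lemma single_smul_single (q : Fin 6) (c : ℝ) :
    c • (Pi.single q 1 : Fin 6 → ℝ) = Pi.single q c := by
  ext i
  simp [Pi.single_apply, mul_ite]

lemma ι_eq_sum (u : V) : ι ℝ u = ∑ q, u q • ee q := by
  have : u = ∑ q, u q • (Pi.single q 1 : Fin 6 → ℝ) := by
    simp_rw [single_smul_single]
    exact (Finset.univ_sum_single u).symm
  conv_lhs => rw [this]
  simp [ee, map_sum]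

lemma ι_mul_vol (u : V) : ι ℝ u * vol = 0 := by
  rw [ι_eq_sum, Finset.sum_mul]
  simp [smul_mul_assoc, ee_mul_vol]


/-! ### the Euler operator -/

noncomputable def EulL : Λ →ₗ[ℝ] Λ :=
  ∑ q, (LinearMap.mulLeft ℝ (ee q)) ∘ₗ
    (CliffordAlgebra.contractLeft (dualV (Pi.single q 1)) : Λ →ₗ[ℝ] Λ)

lemma EulL_apply (x : Λ) : EulL x = ∑ q, ee q * icontr (Pi.single q 1) x := by
  simp [EulL, icontr, LinearMap.mulLeft_apply]

lemma EulL_one : EulL (1:Λ) = 0 := by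
  simp [EulL_apply, icontr_one]

lemma swι2 (i : Fin 6) (u : V) (z : Λ) :
    ee i * (ι ℝ u * z) = -(ι ℝ u * (ee i * z)) :=
  swι _ _ _

lemma EulL_ι_mul (u : V) (x : Λ) :
    EulL (ι ℝ u * x) = ι ℝ u * x + ι ℝ u * EulL x := by
  have h1 : ∀ q : Fin 6, ee q * icontr (Pi.single q 1) (ι ℝ u * x)
      = u q • (ee q * x) + ι ℝ u * (ee q * icontr (Pi.single q 1) x) := by
    intro q
    rw [icontr_ι_mul, mul_sub, dualV_single, mul_smul_comm, swι2, sub_neg_eq_add]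
    rfl
  rw [EulL_apply, Finset.sum_congr rfl (fun q _ => h1 q), Finset.sum_add_distrib,
    ← Finset.mul_sum, ← EulL_apply]
  congr 1
  rw [ι_eq_sum, Finset.sum_mul]
  simp [smul_mul_assoc]

lemma EulL_ιMulti (k : ℕ) (w : Fin k → V) :
    EulL (ιMulti ℝ k w) = (k : ℝ) • ιMulti ℝ k w := by
  induction k with
  | zero => rw [ιMulti_zero_apply]; simp [EulL_one]
  | succ n ih =>
    rw [ιMulti_succ_apply, EulL_ι_mul, ih, mul_smul_comm]
    push_cast
    rw [add_smul, one_smul]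
    abel

/-! ### six-fold products are multiples of `vol` -/

lemma vol_eq : ιMulti ℝ 6 (fun i => (Pi.single i 1 : V)) = vol := by
  rw [ιMulti_apply]
  simp only [List.ofFn_succ, List.ofFn_zero, List.prod_cons, List.prod_nil, vol, ee,
    mul_assoc, mul_one]
  rfl

lemma ιMulti_six (w : Fin 6 → V) :
    ιMulti ℝ 6 w = Matrix.detRowAlternating w • vol := by
  have h : (ιMulti ℝ 6 : V [⋀^Fin 6]→ₗ[ℝ] Λ)
      = (LinearMap.toSpanSingleton ℝ Λ vol).compAlternatingMap
          (Matrix.detRowAlternating : (Fin 6 → ℝ) [⋀^Fin 6]→ₗ[ℝ] ℝ) := by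
    apply Module.Basis.ext_alternating (Pi.basisFun ℝ (Fin 6))
    intro v hv
    have hb : Function.Bijective v := Finite.injective_iff_bijective.mp hv
    let σ : Equiv.Perm (Fin 6) := Equiv.ofBijective v hb
    have hveq : (fun i => Pi.basisFun ℝ (Fin 6) (v i))
        = (fun i => Pi.basisFun ℝ (Fin 6) i) ∘ σ := rfl
    rw [hveq, AlternatingMap.map_perm, AlternatingMap.map_perm]
    congr 1
    have hbasis : (fun i => Pi.basisFun ℝ (Fin 6) i)
        = fun i => (Pi.single i 1 : V) := by
      funext i; simp
    rw [LinearMap.compAlternatingMap_apply, LinearMap.toSpanSingleton_apply,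
      ← Pi.basisFun_det, Module.Basis.det_self, one_smul, hbasis, vol_eq]
  rw [h, LinearMap.compAlternatingMap_apply, LinearMap.toSpanSingleton_apply]


/-! ### the coefficient functional -/

noncomputable def Ff : Λ →ₗ[ℝ] ℝ :=
  liftAlternating (Function.update
    (fun i => (0 : (Fin 6 → ℝ) [⋀^Fin i]→ₗ[ℝ] ℝ)) 6
    (Matrix.detRowAlternating : (Fin 6 → ℝ) [⋀^Fin 6]→ₗ[ℝ] ℝ))

lemma Ff_ιMulti6 (w : Fin 6 → V) :
    Ff (ιMulti ℝ 6 w) = Matrix.detRowAlternating w := by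
  rw [Ff, liftAlternating_apply_ιMulti]
  simp

lemma Ff_vol : Ff vol = 1 := by
  rw [← vol_eq, Ff_ιMulti6]
  have hbasis : (fun i => (Pi.single i 1 : V)) = fun i => Pi.basisFun ℝ (Fin 6) i := by
    funext i; simp
  rw [hbasis, ← Pi.basisFun_det, Module.Basis.det_self]

/-! ### reconstruction of five-forms -/

noncomputable def recL : Λ →ₗ[ℝ] Λ :=
  ∑ q, (LinearMap.toSpanSingleton ℝ Λ (icontr (Pi.single q 1) vol)) ∘ₗ
    (Ff ∘ₗ (LinearMap.mulLeft ℝ (ee q)))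

lemma recL_apply (x : Λ) :
    recL x = ∑ q, Ff (ee q * x) • icontr (Pi.single q 1) vol := by
  simp [recL, LinearMap.mulLeft_apply]

lemma ee_mul_ιMulti5 (q : Fin 6) (w : Fin 5 → V) :
    ee q * ιMulti ℝ 5 w = ιMulti ℝ 6 (Fin.cons (Pi.single q 1) w) := by
  rw [ιMulti_succ_apply]
  rfl

lemma recon (w : Fin 5 → V) : recL (ιMulti ℝ 5 w) = ιMulti ℝ 5 w := by
  set x := ιMulti ℝ 5 w with hx
  have h6 : ∀ q, ee q * x = Ff (ee q * x) • vol := by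
    intro q
    conv_lhs => rw [ee_mul_ιMulti5, ιMulti_six]
    rw [hx, ee_mul_ιMulti5, Ff_ιMulti6]
  have h1 : ∀ q, icontr (Pi.single q 1) (ee q * x)
      = x - ee q * icontr (Pi.single q 1) x := by
    intro q
    rw [show ee q * x = ι ℝ (Pi.single q 1) * x from rfl, icontr_ι_mul, dualV_apply_single]
    simp only [Pi.single_eq_same, one_smul]
    rfl
  have h2 : ∑ q, icontr (Pi.single q 1) (ee q * x) = x := by
    rw [Finset.sum_congr rfl fun q _ => h1 q, Finset.sum_sub_distrib, ← EulL_apply, hx,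
      EulL_ιMulti, Finset.sum_const, Finset.card_univ, Fintype.card_fin]
    have : (6 : ℕ) • ιMulti ℝ 5 w = (6 : ℝ) • ιMulti ℝ 5 w := by
      rw [← Nat.cast_smul_eq_nsmul ℝ]; norm_num
    rw [this, ← sub_smul]
    norm_num
  calc recL x = ∑ q, Ff (ee q * x) • icontr (Pi.single q 1) vol := recL_apply x
    _ = ∑ q, icontr (Pi.single q 1) (Ff (ee q * x) • vol) := by
          refine Finset.sum_congr rfl fun q _ => ?_
          simp [icontr]
    _ = ∑ q, icontr (Pi.single q 1) (ee q * x) := by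
          refine Finset.sum_congr rfl fun q _ => ?_
          rw [← h6 q]
    _ = x := h2

noncomputable def P : Submodule ℝ Λ := LinearMap.ker (LinearMap.id - recL)

lemma mem_P {x : Λ} (h : x ∈ P) : recL x = x := by
  have := h
  rw [P, LinearMap.mem_ker, LinearMap.sub_apply, LinearMap.id_apply, sub_eq_zero] at this
  exact this.symm

lemma ιMulti5_mem_P (w : Fin 5 → V) : ιMulti ℝ 5 w ∈ P := by
  rw [P, LinearMap.mem_ker, LinearMap.sub_apply, LinearMap.id_apply, recon, sub_self]


/-! ### three-form monomials -/

lemma prod3_eq (a : Fin 3 → V) :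
    ιMulti ℝ 3 a = ι ℝ (a 0) * (ι ℝ (a 1) * (ι ℝ (a 2) * 1)) := by
  rw [ιMulti_succ_apply, ιMulti_succ_apply, ιMulti_succ_apply, ιMulti_zero_apply]
  rfl

lemma contr3 (v : V) (a : Fin 3 → V) :
    icontr v (ιMulti ℝ 3 a)
      = dualV v (a 0) • (ι ℝ (a 1) * (ι ℝ (a 2) * 1))
        - dualV v (a 1) • (ι ℝ (a 0) * (ι ℝ (a 2) * 1))
        + dualV v (a 2) • (ι ℝ (a 0) * (ι ℝ (a 1) * 1)) := by
  rw [prod3_eq, icontr_ι_mul, icontr_ι_mul, icontr_ι_mul, icontr_one]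
  simp only [mul_zero, sub_zero, mul_sub, mul_smul_comm, mul_one]
  abel

lemma ι_comm_P (u : V) (a : Fin 3 → V) :
    ι ℝ u * ιMulti ℝ 3 a = -(ιMulti ℝ 3 a * ι ℝ u) := by
  rw [prod3_eq, swι u (a 0), swι u (a 1), swι u (a 2)]
  simp [mul_neg, neg_neg, mul_one, one_mul, mul_assoc]

lemma m_comm (a b : Fin 3 → V) :
    ιMulti ℝ 3 a * ιMulti ℝ 3 b = -(ιMulti ℝ 3 b * ιMulti ℝ 3 a) := by
  have comm' : ∀ u : V, ιMulti ℝ 3 a * ι ℝ u = -(ι ℝ u * ιMulti ℝ 3 a) := by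
    intro u; rw [ι_comm_P]; simp
  have move : ∀ (u : V) (y : Λ),
      ιMulti ℝ 3 a * (ι ℝ u * y) = -(ι ℝ u * (ιMulti ℝ 3 a * y)) := by
    intro u y; rw [← mul_assoc, comm' u, neg_mul, mul_assoc]
  conv_lhs => rw [prod3_eq b]
  conv_rhs => rw [prod3_eq b]
  rw [move (b 0), move (b 1), move (b 2)]
  simp [mul_neg, neg_neg, mul_one, one_mul, mul_assoc]

/-! ### membership in `P` -/

lemma prod2_mul_mem (x y : V) (b : Fin 3 → V) :
    (ι ℝ x * (ι ℝ y * 1)) * ιMulti ℝ 3 b ∈ P := by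
  have h : (ι ℝ x * (ι ℝ y * 1)) * ιMulti ℝ 3 b
      = ιMulti ℝ 5 (Fin.cons x (Fin.cons y b)) := by
    rw [ιMulti_succ_apply, ιMulti_succ_apply]
    simp only [mul_one, mul_assoc]
    rfl
  rw [h]
  exact ιMulti5_mem_P _

lemma base5 (v : V) (a b : Fin 3 → V) :
    icontr v (ιMulti ℝ 3 a) * ιMulti ℝ 3 b ∈ P := by
  rw [contr3, add_mul, sub_mul, smul_mul_assoc, smul_mul_assoc, smul_mul_assoc]
  exact add_mem (sub_mem (Submodule.smul_mem _ _ (prod2_mul_mem _ _ _))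
    (Submodule.smul_mem _ _ (prod2_mul_mem _ _ _)))
    (Submodule.smul_mem _ _ (prod2_mul_mem _ _ _))

/-! ### linearity of `icontr` in the vector variable -/

lemma dualV_add (u v : V) : dualV (u + v) = dualV u + dualV v := by
  ext w; simp [dualV_apply, add_mul, Finset.sum_add_distrib]

lemma dualV_smul (c : ℝ) (u : V) : dualV (c • u) = c • dualV u := by
  ext w; simp [dualV_apply, Finset.mul_sum, mul_assoc]

lemma icontr_add (u v : V) (x : Λ) :
    icontr (u + v) x = icontr u x + icontr v x := by
  rw [icontr, icontr, icontr, dualV_add, map_add]; rfl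

lemma icontr_smul (c : ℝ) (u : V) (x : Λ) :
    icontr (c • u) x = c • icontr u x := by
  rw [icontr, icontr, dualV_smul, map_smul]; rfl

/-! ### the endomorphism -/

noncomputable def Amap (φ : Λ) : (Fin 6 → ℝ) →ₗ[ℝ] (Fin 6 → ℝ) where
  toFun v q := Ff (ee q * (icontr v φ * φ))
  map_add' u v := by
    funext q
    simp only [icontr_add, add_mul, mul_add, map_add, Pi.add_apply]
  map_smul' c v := by
    funext q
    simp only [icontr_smul, smul_mul_assoc, mul_smul_comm, map_smul, RingHom.id_apply,
      Pi.smul_apply, smul_eq_mul]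

lemma Amap_apply (φ : Λ) (v : V) (q : Fin 6) :
    Amap φ v q = Ff (ee q * (icontr v φ * φ)) := rfl

end Stmt16Aux

set_option maxHeartbeats 1000000 in
open Stmt16Aux in
theorem stmt16 (φ : ExteriorAlgebra ℝ (Fin 6 → ℝ)) (hφ : φ ∈ threeForms) :
    ∃ A : (Fin 6 → ℝ) →ₗ[ℝ] (Fin 6 → ℝ),
      (∀ v, icontr v φ * φ = icontr (A v) vol) ∧
      LinearMap.trace ℝ (Fin 6 → ℝ) A = 0 := by
  classical
  have euler3 : EulL φ = (3:ℝ) • φ := by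
    have hle : threeForms ≤ LinearMap.ker (EulL - (3:ℝ) • LinearMap.id) := by
      rw [threeForms, Submodule.span_le]
      rintro _ ⟨a, rfl⟩
      simp only [SetLike.mem_coe, LinearMap.mem_ker, LinearMap.sub_apply, LinearMap.smul_apply,
        LinearMap.id_apply]
      rw [EulL_ιMulti]
      norm_num
    have h := hle hφ
    rw [LinearMap.mem_ker, LinearMap.sub_apply, LinearMap.smul_apply, LinearMap.id_apply,
      sub_eq_zero] at h
    exact h
  have anti1 : ∀ a : Fin 3 → (Fin 6 → ℝ),
      ιMulti ℝ 3 a * φ + φ * ιMulti ℝ 3 a = 0 := by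
    intro a
    have hle : threeForms ≤ LinearMap.ker
        (LinearMap.mulLeft ℝ (ιMulti ℝ 3 a) + LinearMap.mulRight ℝ (ιMulti ℝ 3 a)) := by
      rw [threeForms, Submodule.span_le]
      rintro _ ⟨b, rfl⟩
      simp only [SetLike.mem_coe, LinearMap.mem_ker, LinearMap.add_apply,
        LinearMap.mulLeft_apply, LinearMap.mulRight_apply]
      rw [m_comm a b]
      simp
    have h := hle hφ
    rw [LinearMap.mem_ker, LinearMap.add_apply, LinearMap.mulLeft_apply,
      LinearMap.mulRight_apply] at h
    exact h
  have antiφ : φ * φ + φ * φ = 0 := by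
    have hle : threeForms ≤ LinearMap.ker (LinearMap.mulLeft ℝ φ + LinearMap.mulRight ℝ φ) := by
      rw [threeForms, Submodule.span_le]
      rintro _ ⟨b, rfl⟩
      simp only [SetLike.mem_coe, LinearMap.mem_ker, LinearMap.add_apply,
        LinearMap.mulLeft_apply, LinearMap.mulRight_apply]
      rw [add_comm]
      exact anti1 b
    have h := hle hφ
    rw [LinearMap.mem_ker, LinearMap.add_apply, LinearMap.mulLeft_apply,
      LinearMap.mulRight_apply] at h
    exact h
  have φφ : φ * φ = 0 := by
    have h2 : (2:ℝ) • (φ * φ) = 0 := by rw [two_smul]; exact antiφ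
    rcases smul_eq_zero.mp h2 with h | h
    · norm_num at h
    · exact h
  have hP : ∀ v, icontr v φ * φ ∈ P := by
    intro v
    have inner : ∀ a : Fin 3 → (Fin 6 → ℝ), ∀ v',
        icontr v' (ιMulti ℝ 3 a) * φ ∈ P := by
      intro a v'
      have hle : threeForms ≤ Submodule.comap
          (LinearMap.mulLeft ℝ (icontr v' (ιMulti ℝ 3 a))) P := by
        rw [threeForms, Submodule.span_le]
        rintro _ ⟨b, rfl⟩
        exact base5 v' a b
      exact hle hφ
    have hle : threeForms ≤ Submodule.comap
        ((LinearMap.mulRight ℝ φ) ∘ₗ (CliffordAlgebra.contractLeft (dualV v) :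
          ExteriorAlgebra ℝ (Fin 6 → ℝ) →ₗ[ℝ] ExteriorAlgebra ℝ (Fin 6 → ℝ))) P := by
      rw [threeForms, Submodule.span_le]
      rintro _ ⟨a, rfl⟩
      simp only [SetLike.mem_coe, Submodule.mem_comap, LinearMap.comp_apply,
        LinearMap.mulRight_apply]
      exact inner a v
    have h := hle hφ
    simpa [icontr] using h
  refine ⟨Amap φ, ?_, ?_⟩
  · intro v
    have hrec := mem_P (hP v)
    rw [recL_apply] at hrec
    rw [icontr_sum (Amap φ v) vol]
    exact hrec.symm
  · rw [LinearMap.trace_eq_matrix_trace ℝ (Pi.basisFun ℝ (Fin 6))]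
    have hd : ∀ q : Fin 6, (LinearMap.toMatrix (Pi.basisFun ℝ (Fin 6)) (Pi.basisFun ℝ (Fin 6))
        (Amap φ)) q q = Ff (ee q * (icontr (Pi.single q 1) φ * φ)) := by
      intro q
      rw [LinearMap.toMatrix_apply, Pi.basisFun_repr, Pi.basisFun_apply, Amap_apply]
    have hsum : ∑ q, ee q * (icontr (Pi.single q 1) φ * φ) = EulL φ * φ := by
      rw [EulL_apply, Finset.sum_mul]
      exact Finset.sum_congr rfl fun q _ => (mul_assoc _ _ _).symm
    rw [Matrix.trace]
    simp only [Matrix.diag]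
    rw [Finset.sum_congr rfl fun q _ => hd q, ← map_sum, hsum, euler3, smul_mul_assoc, φφ,
      smul_zero, map_zero]
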